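/- Let J be a random variable on positive integers with P(J = j) = q_j = 4^{−j}(4·Cat(j−1) − Cat(j)). Then (q_j)_{j≥1} is a probability mass function and E[J] = 2. -/

import Mathlib

/-- `q j = 4^{−j}(4·Cat(j−1) − Cat(j))`, for `j ≥ 1` the probability that a left step of the
Schnyder peeling process covers `j` boundary vertices to the left. -/
noncomputable def qDist (j : ℕ) : ℝ :=
  (4 : ℝ) ^ (-(j : ℤ)) * (4 * catalan (j - 1) - catalan j)

namespace Stmt9Aux

/-- `c n = centralBinom n / 4^n`. -/
noncomputable def c (n : ℕ) : ℝ := (Nat.centralBinom n : ℝ) / 4 ^ n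

/-- `a n = catalan n / 4^n`. -/
noncomputable def a (n : ℕ) : ℝ := (catalan n : ℝ) / 4 ^ n

lemma c_pos (n : ℕ) : 0 < c n := by
  have := Nat.centralBinom_pos n
  unfold c
  positivity

lemma a_eq (n : ℕ) : a n = c n / (n + 1) := by
  have h : ((n : ℝ) + 1) * (catalan n : ℝ) = (Nat.centralBinom n : ℝ) := by
    exact_mod_cast congrArg (Nat.cast : ℕ → ℝ) (succ_mul_catalan_eq_centralBinom n)
  have hn : ((n : ℝ) + 1) ≠ 0 := by positivity
  unfold a c
  field_simp
  linear_combination h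

lemma c_succ (n : ℕ) : c (n + 1) = (2 * n + 1) / (2 * (n + 1)) * c n := by
  have h : ((n : ℝ) + 1) * (Nat.centralBinom (n + 1) : ℝ)
      = 2 * (2 * n + 1) * (Nat.centralBinom n : ℝ) := by
    exact_mod_cast congrArg (Nat.cast : ℕ → ℝ) (Nat.succ_mul_centralBinom_succ n)
  have hn : ((n : ℝ) + 1) ≠ 0 := by positivity
  unfold c
  rw [pow_succ]
  field_simp
  linear_combination 2 * h

lemma q_telescope (n : ℕ) : qDist (n + 1) = a n - a (n + 1) := by
  unfold qDist a
  have h4 : ((4 : ℝ)) ^ (-(((n : ℕ) + 1 : ℕ) : ℤ)) = ((4 : ℝ) ^ (n + 1))⁻¹ := by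
    rw [zpow_neg, zpow_natCast]
  simp only [Nat.add_sub_cancel, h4]
  have h1 : (4 : ℝ) ^ (n + 1) ≠ 0 := by positivity
  have h2 : (4 : ℝ) ^ n ≠ 0 := by positivity
  field_simp
  ring

lemma a_succ_le (n : ℕ) : a (n + 1) ≤ a n := by
  rw [a_eq, a_eq, c_succ]
  have hc := (c_pos n).le
  have h1 : (0 : ℝ) < (n : ℝ) + 1 := by positivity
  have h2 : (0 : ℝ) < (n : ℝ) + 1 + 1 := by positivity
  push_cast
  rw [div_mul_eq_mul_div, div_div, div_le_div_iff₀ (by positivity) h1]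
  nlinarith [hc]

lemma q_nonneg (n : ℕ) : 0 ≤ qDist (n + 1) := by
  rw [q_telescope]; linarith [a_succ_le n]

lemma sq_bound (n : ℕ) : (2 * n + 1) * Nat.centralBinom n ^ 2 ≤ 16 ^ n := by
  induction n with
  | zero => simp [Nat.centralBinom]
  | succ n ih =>
    have key : (n + 1) ^ 2 * ((2 * (n + 1) + 1) * Nat.centralBinom (n + 1) ^ 2)
        ≤ (n + 1) ^ 2 * 16 ^ (n + 1) := by
      have h1 : (n + 1) ^ 2 * ((2 * (n + 1) + 1) * Nat.centralBinom (n + 1) ^ 2)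
          = (2 * n + 3) * ((n + 1) * Nat.centralBinom (n + 1)) ^ 2 := by ring
      rw [h1, Nat.succ_mul_centralBinom_succ]
      have h2 : (2 * n + 3) * (2 * (2 * n + 1) * Nat.centralBinom n) ^ 2
          = (4 * (2 * n + 1) * (2 * n + 3)) * ((2 * n + 1) * Nat.centralBinom n ^ 2) := by ring
      rw [h2]
      calc (4 * (2 * n + 1) * (2 * n + 3)) * ((2 * n + 1) * Nat.centralBinom n ^ 2)
          ≤ (4 * (2 * n + 1) * (2 * n + 3)) * 16 ^ n := by
            exact Nat.mul_le_mul_left _ ih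
        _ ≤ (16 * (n + 1) ^ 2) * 16 ^ n := by
            apply Nat.mul_le_mul_right; nlinarith
        _ = (n + 1) ^ 2 * 16 ^ (n + 1) := by ring
    exact Nat.le_of_mul_le_mul_left key (by positivity)

lemma c_sq_le (n : ℕ) : c n ^ 2 ≤ 1 / (2 * n + 1) := by
  have h := sq_bound n
  have hR : ((2 * n + 1 : ℕ) : ℝ) * (Nat.centralBinom n : ℝ) ^ 2 ≤ (16 : ℝ) ^ n := by
    exact_mod_cast h
  have hpos : (0 : ℝ) < 2 * (n : ℝ) + 1 := by positivity
  unfold c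
  rw [div_pow, ← pow_mul]
  rw [div_le_div_iff₀ (by positivity) hpos]
  have h16 : (4 : ℝ) ^ (n * 2) = 16 ^ n := by
    rw [mul_comm, pow_mul]; norm_num
  rw [h16]
  push_cast at hR
  nlinarith [hR]

lemma c_tendsto : Filter.Tendsto c Filter.atTop (nhds 0) := by
  have hsq : Filter.Tendsto (fun n => c n ^ 2) Filter.atTop (nhds 0) := by
    apply squeeze_zero (fun n => by positivity) (fun n => c_sq_le n)
    have h1 : Filter.Tendsto (fun n : ℕ => 1 / ((n : ℝ) + 1)) Filter.atTop (nhds 0) :=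
      tendsto_one_div_add_atTop_nhds_zero_nat
    apply squeeze_zero (fun n => by positivity) _ h1
    intro n
    apply div_le_div_of_nonneg_left (by norm_num) (by positivity)
    push_cast; linarith
  have : Filter.Tendsto (fun n => Real.sqrt (c n ^ 2)) Filter.atTop (nhds (Real.sqrt 0)) :=
    (Real.continuous_sqrt.tendsto 0).comp hsq
  simpa [Real.sqrt_sq (c_pos _).le] using this

lemma a_le_c (n : ℕ) : a n ≤ c n := by
  rw [a_eq]
  have := (c_pos n).le
  rw [div_le_iff₀ (by positivity)]
  nlinarith [this]

lemma a_nonneg (n : ℕ) : 0 ≤ a n := by unfold a; positivity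

lemma a_tendsto : Filter.Tendsto a Filter.atTop (nhds 0) :=
  squeeze_zero a_nonneg a_le_c c_tendsto

lemma na_tendsto : Filter.Tendsto (fun n : ℕ => (n : ℝ) * a n) Filter.atTop (nhds 0) := by
  apply squeeze_zero (fun n => mul_nonneg (Nat.cast_nonneg n) (a_nonneg n))
    (fun n => ?_) c_tendsto
  rw [a_eq]
  have := (c_pos n).le
  rw [mul_div_assoc', div_le_iff₀ (by positivity)]
  nlinarith [this]

lemma sum_a (N : ℕ) : ∑ j ∈ Finset.range N, a j = 2 - 2 * c N := by
  induction N with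
  | zero => simp [c, Nat.centralBinom]
  | succ N ih =>
    rw [Finset.sum_range_succ, ih, c_succ, a_eq]
    have hN : ((N : ℝ) + 1) ≠ 0 := by positivity
    field_simp
    ring

lemma sum_q (N : ℕ) : ∑ j ∈ Finset.range N, qDist (j + 1) = 1 - a N := by
  have : ∀ j, qDist (j + 1) = a j - a (j + 1) := q_telescope
  simp only [this]
  rw [Finset.sum_range_sub' a]
  have ha0 : a 0 = 1 := by simp [a]
  rw [ha0]

lemma sum_e (N : ℕ) :
    ∑ j ∈ Finset.range N, ((j : ℝ) + 1) * qDist (j + 1)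
      = (2 - 2 * c N) - N * a N := by
  rw [← sum_a]
  induction N with
  | zero => simp
  | succ N ih =>
    rw [Finset.sum_range_succ, ih, Finset.sum_range_succ, q_telescope]
    push_cast
    ring

end Stmt9Aux

open Stmt9Aux in
/-- `(q_j)_{j≥1}` is a probability mass function and `E[J] = 2`. -/
theorem stmt_9 :
    (∀ j : ℕ, 1 ≤ j → 0 ≤ qDist j)
    ∧ HasSum (fun j : ℕ => qDist (j + 1)) 1
    ∧ HasSum (fun j : ℕ => ((j : ℝ) + 1) * qDist (j + 1)) 2 := by
  refine ⟨?_, ?_, ?_⟩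
  · intro j hj
    obtain ⟨n, rfl⟩ := Nat.exists_eq_add_of_le hj
    simpa [add_comm] using q_nonneg n
  · rw [hasSum_iff_tendsto_nat_of_nonneg (fun n => q_nonneg n)]
    simp only [sum_q]
    have : Filter.Tendsto (fun N : ℕ => 1 - a N) Filter.atTop (nhds (1 - 0)) :=
      Filter.Tendsto.const_sub _ a_tendsto
    simpa using this
  · rw [hasSum_iff_tendsto_nat_of_nonneg
      (fun n => mul_nonneg (by positivity) (q_nonneg n))]
    simp only [sum_e]
    have h1 : Filter.Tendsto (fun N : ℕ => 2 - 2 * c N) Filter.atTop (nhds (2 - 2 * 0)) :=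
      (Filter.Tendsto.const_mul 2 c_tendsto).const_sub 2
    have h2 := h1.sub na_tendsto
    simpa using h2
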